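/- Let β : [0, t₀) → ℝ be a C¹ solution of β'(t) = −A(t)/(2β(t)) − B(t), where A, B : [0,t₀) → ℝ are continuous with A(t) → a₄ > 0 and B(t) → a₅ ∈ ℝ as t ↑ t₀, and suppose β(t) → 0 as t ↑ t₀ with β(t) ≠ 0 on [0,t₀). Then β(t)² = a₄(t₀ − t) + o(t₀ − t) as t ↑ t₀. -/

import Mathlib

open Filter Topology Set Asymptotics

/-- Blow-up rate from the pointwise equation: if `β' = -A/(2β) - B` on `[0,t₀)` with
`A → a₄ > 0`, `B → a₅`, `β → 0` and `β ≠ 0`, then `β(t)² = a₄(t₀-t) + o(t₀-t)` as `t ↑ t₀`. -/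
theorem beta_squared_rate
    (t₀ a₄ a₅ : ℝ) (ht₀ : 0 < t₀) (ha₄ : 0 < a₄)
    (β A B : ℝ → ℝ)
    (hA : ContinuousOn A (Ico 0 t₀)) (hB : ContinuousOn B (Ico 0 t₀))
    (hAlim : Tendsto A (𝓝[<] t₀) (𝓝 a₄))
    (hBlim : Tendsto B (𝓝[<] t₀) (𝓝 a₅))
    (hβne : ∀ t ∈ Ico (0:ℝ) t₀, β t ≠ 0)
    (hβode : ∀ t ∈ Ico (0:ℝ) t₀, HasDerivAt β (-(A t) / (2 * β t) - B t) t)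
    (hβlim : Tendsto β (𝓝[<] t₀) (𝓝 0)) :
    (fun t => (β t) ^ 2 - a₄ * (t₀ - t)) =o[𝓝[<] t₀] (fun t => t₀ - t) := by
  set φ : ℝ → ℝ := fun x => -A x - 2 * β x * B x + a₄ with hφ
  set h : ℝ → ℝ := fun x => β x ^ 2 + a₄ * x with hh
  have hder : Tendsto φ (𝓝[<] t₀) (𝓝 0) := by
    have : Tendsto φ (𝓝[<] t₀) (𝓝 (-a₄ - 2 * 0 * a₅ + a₄)) := by
      exact (hAlim.neg.sub (((tendsto_const_nhds.mul hβlim)).mul hBlim)).add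
        tendsto_const_nhds
    simpa using this
  have hhlim : Tendsto h (𝓝[<] t₀) (𝓝 (a₄ * t₀)) := by
    have : Tendsto h (𝓝[<] t₀) (𝓝 (0 ^ 2 + a₄ * t₀)) := by
      exact (hβlim.pow 2).add (tendsto_const_nhds.mul
        (tendsto_id.mono_left nhdsWithin_le_nhds))
    simpa using this
  rw [Asymptotics.isLittleO_iff]
  intro c hc
  have h1 : ∀ᶠ s in 𝓝[<] t₀, |φ s| ≤ c := by
    have := hder.eventually (Metric.closedBall_mem_nhds (0 : ℝ) hc)
    filter_upwards [this] with s hs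
    simpa [Real.dist_eq] using hs
  have h2 : Ioo (0 : ℝ) t₀ ∈ 𝓝[<] t₀ := Ioo_mem_nhdsLT_of_mem ⟨ht₀, le_refl _⟩
  have h3 : {s | |φ s| ≤ c} ∩ Ioo 0 t₀ ∈ 𝓝[<] t₀ := inter_mem h1 h2
  obtain ⟨u, hu, hsub⟩ := mem_nhdsLT_iff_exists_Ioo_subset.mp h3
  have hIoo : Ioo u t₀ ∈ 𝓝[<] t₀ := Ioo_mem_nhdsLT_of_mem ⟨hu, le_refl _⟩
  filter_upwards [hIoo] with t ht
  -- t ∈ Ioo u t₀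
  have htS := hsub ht
  have ht0 : 0 < t := htS.2.1
  have htlt : t < t₀ := ht.2
  -- derivative of h on Ico t t₀
  have hderiv : ∀ x ∈ Ico t t₀, HasDerivWithinAt h (φ x) (Ico t t₀) x := by
    intro x hx
    have hx0 : x ∈ Ico (0 : ℝ) t₀ := ⟨le_trans ht0.le hx.1, hx.2⟩
    have hbx := hβode x hx0
    have hne := hβne x hx0
    have hd : HasDerivAt h (2 * β x ^ 1 * (-(A x) / (2 * β x) - B x) + a₄ * 1) x := by
      exact (hbx.pow 2).add ((hasDerivAt_id x).const_mul a₄)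
    have heq : 2 * β x ^ 1 * (-(A x) / (2 * β x) - B x) + a₄ * 1 = φ x := by
      field_simp [hφ]
      rfl
    rw [heq] at hd
    exact hd.hasDerivWithinAt
  have hbound : ∀ x ∈ Ico t t₀, ‖φ x‖ ≤ c := by
    intro x hx
    have : x ∈ Ioo u t₀ := ⟨lt_of_lt_of_le ht.1 hx.1, hx.2⟩
    simpa [Real.norm_eq_abs] using (hsub this).1
  have key : ∀ t' ∈ Ico t t₀, ‖h t' - h t‖ ≤ c * ‖t' - t‖ := by
    intro t' ht'
    exact (convex_Ico t t₀).norm_image_sub_le_of_norm_hasDerivWithin_le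
      hderiv hbound ⟨le_refl t, htlt⟩ ht'
  -- take the limit t' → t₀⁻
  have hlim1 : Tendsto (fun t' => ‖h t' - h t‖) (𝓝[<] t₀) (𝓝 ‖a₄ * t₀ - h t‖) :=
    ((hhlim.sub tendsto_const_nhds).norm)
  have hev : ∀ᶠ t' in 𝓝[<] t₀, ‖h t' - h t‖ ≤ c * (t₀ - t) := by
    have hIoo' : Ioo t t₀ ∈ 𝓝[<] t₀ := Ioo_mem_nhdsLT_of_mem ⟨htlt, le_refl _⟩
    filter_upwards [hIoo'] with t' ht'
    have := key t' ⟨ht'.1.le, ht'.2⟩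
    have h4 : ‖t' - t‖ ≤ t₀ - t := by
      rw [Real.norm_eq_abs, abs_of_nonneg (by linarith [ht'.1] : (0:ℝ) ≤ t' - t)]
      linarith [ht'.2]
    calc ‖h t' - h t‖ ≤ c * ‖t' - t‖ := this
      _ ≤ c * (t₀ - t) := by nlinarith
  have hfinal : ‖a₄ * t₀ - h t‖ ≤ c * (t₀ - t) := le_of_tendsto hlim1 hev
  have : β t ^ 2 - a₄ * (t₀ - t) = -(a₄ * t₀ - h t) := by simp [hh]; ring
  rw [this]
  rw [norm_neg]
  calc ‖a₄ * t₀ - h t‖ ≤ c * (t₀ - t) := hfinal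
    _ = c * ‖t₀ - t‖ := by rw [Real.norm_eq_abs, abs_of_nonneg (by linarith)]
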